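/- For every tree T on ℕ, the group G_𝒫(T) is a torsion-free 𝒫-divisible abelian group. -/

import Mathlib

/-- A tree on `ℕ`: a set of finite sequences containing the empty sequence and closed
under initial segments. -/
def IsTree (T : Set (List ℕ)) : Prop :=
  [] ∈ T ∧ ∀ v ∈ T, ∀ u, u <+: v → u ∈ T

/-- The standard basis vector `e_v` of the direct sum `⊕_{v} ℚ`. -/
noncomputable def eVec (v : List ℕ) : List ℕ →₀ ℚ := Finsupp.single v 1

/-- The generating set of the group `G_𝒫(T)`: the elements `(1/(rᵃ · q_{|v|}ᵇ)) • e_v`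
for `v ∈ T`, `r ∈ 𝒫`, `a b : ℕ`, together with the elements
`(1/(rᵃ · p_{|v|})) • (e_v + e_w)` for `v ∈ T` and `w ∈ T` an immediate successor of `v`,
`r ∈ 𝒫`, `a : ℕ`. -/
def treeGroupGens (P : Set ℕ) (p q : ℕ → ℕ) (T : Set (List ℕ)) : Set (List ℕ →₀ ℚ) :=
  {x | ∃ v ∈ T, ∃ r ∈ P, ∃ a b : ℕ,
      x = (1 / ((r : ℚ) ^ a * (q v.length : ℚ) ^ b)) • eVec v} ∪
  {x | ∃ v ∈ T, ∃ w ∈ T, v <+: w ∧ w.length = v.length + 1 ∧ ∃ r ∈ P, ∃ a : ℕ,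
      x = (1 / ((r : ℚ) ^ a * (p v.length : ℚ))) • (eVec v + eVec w)}

/-- The group `G_𝒫(T)`, as a subgroup of the direct sum `⊕_{v} ℚ` (it is contained in
the direct summand `⊕_{v ∈ T} ℚ` spanned by the basis vectors indexed by `T`). -/
noncomputable def treeGroup (P : Set ℕ) (p q : ℕ → ℕ) (T : Set (List ℕ)) :
    AddSubgroup (List ℕ →₀ ℚ) :=
  AddSubgroup.closure (treeGroupGens P p q T)

lemma aux_coprime_smul (H : AddSubgroup (List ℕ →₀ ℚ)) (m n : ℕ)
    (hm0 : m ≠ 0) (hn0 : n ≠ 0) (hco : Nat.Coprime m n) (z : List ℕ →₀ ℚ)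
    (hm : (1 / (m:ℚ)) • z ∈ H) (hn : (1 / (n:ℚ)) • z ∈ H) :
    (1 / ((m:ℚ) * n)) • z ∈ H := by
  obtain ⟨u, v, huv⟩ := (Nat.isCoprime_iff_coprime.mpr hco)
  have key : (1 / ((m:ℚ) * n)) • z = u • ((1 / (n:ℚ)) • z) + v • ((1 / (m:ℚ)) • z) := by
    rw [← Int.cast_smul_eq_zsmul ℚ, ← Int.cast_smul_eq_zsmul ℚ, smul_smul, smul_smul, ← add_smul]
    congr 1
    have hmq : (m:ℚ) ≠ 0 := Nat.cast_ne_zero.mpr hm0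
    have hnq : (n:ℚ) ≠ 0 := Nat.cast_ne_zero.mpr hn0
    have h1 : (u:ℚ) * m + v * n = 1 := by exact_mod_cast congrArg (Int.cast : ℤ → ℚ) huv
    field_simp
    linear_combination (-1 : ℚ) * h1
  rw [key]
  exact H.add_mem (H.zsmul_mem hn u) (H.zsmul_mem hm v)

/-- For every tree `T` on `ℕ`, the group `G_𝒫(T)` is a torsion-free
`𝒫`-divisible abelian group. -/
theorem stmt6 (P : Set ℕ) (hP : ∀ r ∈ P, Nat.Prime r)
    (hPco : {r | Nat.Prime r ∧ r ∉ P}.Infinite)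
    (p q : ℕ → ℕ) (hp : ∀ n, Nat.Prime (p n)) (hq : ∀ n, Nat.Prime (q n))
    (hpinj : Function.Injective p) (hqinj : Function.Injective q)
    (hpq : ∀ m n, p m ≠ q n)
    (hpP : ∀ n, p n ∉ P) (hqP : ∀ n, q n ∉ P)
    (T : Set (List ℕ)) (hT : IsTree T) :
    (∀ x ∈ treeGroup P p q T, ∀ n : ℕ, 1 ≤ n → n • x = 0 → x = 0) ∧
      (∀ r ∈ P, ∀ x ∈ treeGroup P p q T, ∃ y ∈ treeGroup P p q T, x = r • y) := by
  constructor
  · intro x _ n hn hnx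
    have h : (n : ℚ) • x = 0 := by rw [Nat.cast_smul_eq_nsmul]; exact hnx
    rcases smul_eq_zero.mp h with h1 | h1
    · exact absurd h1 (by exact_mod_cast Nat.one_le_iff_ne_zero.mp hn)
    · exact h1
  · intro r hr x hx
    have hrp := hP r hr
    have hr0 : (r : ℚ) ≠ 0 := Nat.cast_ne_zero.mpr hrp.pos.ne'
    set G := treeGroup P p q T with hG
    -- key claim: (r:ℚ)⁻¹ • x ∈ G
    have key : ∀ z ∈ treeGroupGens P p q T, (r:ℚ)⁻¹ • z ∈ G := by
      rintro z (⟨v, hv, r', hr', a, b, rfl⟩ | ⟨v, hv, w, hw, hvw, hlen, r', hr', a, rfl⟩)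
      · have hr'p := hP r' hr'
        rw [smul_smul]
        by_cases hrr : r = r'
        · subst hrr
          have : (r:ℚ)⁻¹ * (1 / ((r : ℚ) ^ a * (q v.length : ℚ) ^ b))
              = 1 / ((r : ℚ) ^ (a+1) * (q v.length : ℚ) ^ b) := by
            rw [pow_succ]; field_simp
          rw [this]
          exact AddSubgroup.subset_closure (Or.inl ⟨v, hv, r, hr, a+1, b, rfl⟩)
        · have hqn0 : q v.length ≠ 0 := (hq v.length).pos.ne'
          have hco : Nat.Coprime r (r' ^ a * q v.length ^ b) := by
            refine Nat.Coprime.mul_right (Nat.Coprime.pow_right _ ?_)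
              (Nat.Coprime.pow_right _ ?_)
            · exact (Nat.coprime_primes hrp hr'p).mpr hrr
            · exact (Nat.coprime_primes hrp (hq v.length)).mpr
                (fun h => hqP v.length (h ▸ hr))
          have heq : (r:ℚ)⁻¹ * (1 / ((r' : ℚ) ^ a * (q v.length : ℚ) ^ b))
              = 1 / ((r:ℚ) * ((r' ^ a * q v.length ^ b : ℕ) : ℚ)) := by
            push_cast; rw [one_div, one_div, ← mul_inv]
          rw [heq]
          refine aux_coprime_smul G r _ hrp.pos.ne' ?hn0 hco _ ?_ ?_
          case hn0 => exact Nat.mul_ne_zero (pow_ne_zero _ hr'p.pos.ne') (pow_ne_zero _ hqn0)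
          · have : (1 / (r:ℚ)) • eVec v
                = (1 / ((r : ℚ) ^ 1 * (q v.length : ℚ) ^ 0)) • eVec v := by norm_num
            rw [this]
            exact AddSubgroup.subset_closure (Or.inl ⟨v, hv, r, hr, 1, 0, rfl⟩)
          · have : ((r' ^ a * q v.length ^ b : ℕ) : ℚ)
                = (r' : ℚ) ^ a * (q v.length : ℚ) ^ b := by push_cast; ring
            rw [this]
            exact AddSubgroup.subset_closure (Or.inl ⟨v, hv, r', hr', a, b, rfl⟩)
      · have hr'p := hP r' hr'
        rw [smul_smul]
        by_cases hrr : r = r'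
        · subst hrr
          have : (r:ℚ)⁻¹ * (1 / ((r : ℚ) ^ a * (p v.length : ℚ)))
              = 1 / ((r : ℚ) ^ (a+1) * (p v.length : ℚ)) := by
            rw [pow_succ]; field_simp
          rw [this]
          exact AddSubgroup.subset_closure
            (Or.inr ⟨v, hv, w, hw, hvw, hlen, r, hr, a+1, rfl⟩)
        · have hco : Nat.Coprime r (r' ^ a * p v.length) := by
            refine Nat.Coprime.mul_right (Nat.Coprime.pow_right _ ?_) ?_
            · exact (Nat.coprime_primes hrp hr'p).mpr hrr
            · exact (Nat.coprime_primes hrp (hp v.length)).mpr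
                (fun h => hpP v.length (h ▸ hr))
          have heq : (r:ℚ)⁻¹ * (1 / ((r' : ℚ) ^ a * (p v.length : ℚ)))
              = 1 / ((r:ℚ) * ((r' ^ a * p v.length : ℕ) : ℚ)) := by
            push_cast; rw [one_div, one_div, ← mul_inv]
          rw [heq]
          refine aux_coprime_smul G r _ hrp.pos.ne' ?hn0 hco _ ?_ ?_
          case hn0 => exact Nat.mul_ne_zero (pow_ne_zero _ hr'p.pos.ne') (hp v.length).pos.ne'
          · have : (1 / (r:ℚ)) • (eVec v + eVec w)
                = (1 / ((r : ℚ) ^ 1 * (q v.length : ℚ) ^ 0)) • eVec v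
                  + (1 / ((r : ℚ) ^ 1 * (q w.length : ℚ) ^ 0)) • eVec w := by
              rw [smul_add]; norm_num
            rw [this]
            exact AddSubgroup.add_mem _
              (AddSubgroup.subset_closure (Or.inl ⟨v, hv, r, hr, 1, 0, rfl⟩))
              (AddSubgroup.subset_closure (Or.inl ⟨w, hw, r, hr, 1, 0, rfl⟩))
          · have : ((r' ^ a * p v.length : ℕ) : ℚ)
                = (r' : ℚ) ^ a * (p v.length : ℚ) := by push_cast; ring
            rw [this]
            exact AddSubgroup.subset_closure
              (Or.inr ⟨v, hv, w, hw, hvw, hlen, r', hr', a, rfl⟩)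
    have hmem : (r:ℚ)⁻¹ • x ∈ G := by
      have hle : treeGroup P p q T ≤
          AddSubgroup.comap (DistribMulAction.toAddMonoidHom (List ℕ →₀ ℚ) ((r:ℚ)⁻¹)) G :=
        AddSubgroup.closure_le _ |>.mpr key
      exact hle hx
    refine ⟨(r:ℚ)⁻¹ • x, hmem, ?_⟩
    rw [← Nat.cast_smul_eq_nsmul ℚ, smul_smul, mul_inv_cancel₀ hr0, one_smul]
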